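/- For the bimolecular conservation structure A = [[1,0,1],[0,1,1]], if X₁, X₂, X₃ are independent Poisson with rates λ₁, λ₂, λ₃ and Y₁ = X₁+X₃, Y₂ = X₂+X₃, then for b₁, b₂ ≥ 1 with P(Y=b)>0: E[X₃ | Y₁=b₁, Y₂=b₂] = λ₃ · F₀(b₁-1, b₂-1)/F₀(b₁,b₂), where F₀(b₁,b₂) = Σ_{k=0}^{min(b₁,b₂)} λ₃ᵏ λ₁^{b₁-k} λ₂^{b₂-k}/(k!(b₁-k)!(b₂-k)!). -/

import Mathlib

open MeasureTheory ProbabilityTheory Real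
open scoped BigOperators

/-- For `A = [[1,0,1],[0,1,1]]`, the single-sum form
`F₀(b₁,b₂) = Σ_{k=0}^{min(b₁,b₂)} λ₃ᵏ λ₁^{b₁-k} λ₂^{b₂-k}/(k!(b₁-k)!(b₂-k)!)`. -/
noncomputable def F0bimol (lam1 lam2 lam3 : ℝ) (b₁ b₂ : ℕ) : ℝ :=
  ∑ k ∈ Finset.range (min b₁ b₂ + 1),
    lam3 ^ k * lam1 ^ (b₁ - k) * lam2 ^ (b₂ - k) /
      (Nat.factorial k * Nat.factorial (b₁ - k) * Nat.factorial (b₂ - k))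

lemma F0bimol_pos {lam1 lam2 lam3 : ℝ} (h1 : 0 < lam1) (h2 : 0 < lam2) (h3 : 0 < lam3)
    (b₁ b₂ : ℕ) : 0 < F0bimol lam1 lam2 lam3 b₁ b₂ := by
  apply Finset.sum_pos
  · intro k _
    have : (0:ℝ) < Nat.factorial k * Nat.factorial (b₁ - k) * Nat.factorial (b₂ - k) := by
      positivity
    positivity
  · exact ⟨0, Finset.mem_range.2 (Nat.succ_pos _)⟩

/-- For independent Poisson `X₁,X₂,X₃` with `Y₁ = X₁+X₃`, `Y₂ = X₂+X₃` and
`b₁,b₂ ≥ 1` with `P(Y=b) > 0`,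
`E[X₃ | Y₁=b₁, Y₂=b₂] = λ₃ F₀(b₁-1,b₂-1)/F₀(b₁,b₂)`. -/
theorem conditional_mean_bimolecular
    {Ω : Type*} [MeasurableSpace Ω] (μ : Measure Ω) [IsProbabilityMeasure μ]
    (X1 X2 X3 : Ω → ℕ) (hm1 : Measurable X1) (hm2 : Measurable X2) (hm3 : Measurable X3)
    (lam1 lam2 lam3 : ℝ) (h1 : 0 < lam1) (h2 : 0 < lam2) (h3 : 0 < lam3)
    (hindep : iIndepFun ![X1, X2, X3] μ)
    (hX1 : ∀ k : ℕ, μ (X1 ⁻¹' {k}) =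
      ENNReal.ofReal (Real.exp (-lam1) * lam1 ^ k / Nat.factorial k))
    (hX2 : ∀ k : ℕ, μ (X2 ⁻¹' {k}) =
      ENNReal.ofReal (Real.exp (-lam2) * lam2 ^ k / Nat.factorial k))
    (hX3 : ∀ k : ℕ, μ (X3 ⁻¹' {k}) =
      ENNReal.ofReal (Real.exp (-lam3) * lam3 ^ k / Nat.factorial k))
    (b₁ b₂ : ℕ) (hb₁ : 1 ≤ b₁) (hb₂ : 1 ≤ b₂)
    (hpos : 0 < μ {ω | X1 ω + X3 ω = b₁ ∧ X2 ω + X3 ω = b₂}) :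
    ∫ ω, ((X3 ω : ℝ)) ∂(μ[|{ω | X1 ω + X3 ω = b₁ ∧ X2 ω + X3 ω = b₂}]) =
      lam3 * F0bimol lam1 lam2 lam3 (b₁ - 1) (b₂ - 1) / F0bimol lam1 lam2 lam3 b₁ b₂ := by
  classical
  set E : Set Ω := {ω | X1 ω + X3 ω = b₁ ∧ X2 ω + X3 ω = b₂} with hEdef
  set B : ℕ → Set Ω := fun k => X1 ⁻¹' {b₁ - k} ∩ X2 ⁻¹' {b₂ - k} ∩ X3 ⁻¹' {k} with hBdef
  set t : ℕ → ℝ := fun k => lam3 ^ k * lam1 ^ (b₁ - k) * lam2 ^ (b₂ - k) /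
      (Nat.factorial k * Nat.factorial (b₁ - k) * Nat.factorial (b₂ - k)) with htdef
  set C : ℝ := Real.exp (-lam1) * Real.exp (-lam2) * Real.exp (-lam3) with hCdef
  have hCpos : 0 < C := by positivity
  have ht_pos : ∀ k, 0 < t k := by
    intro k
    have : (0:ℝ) < Nat.factorial k * Nat.factorial (b₁ - k) * Nat.factorial (b₂ - k) := by
      positivity
    simp only [htdef]
    positivity
  have hBmeas : ∀ k, MeasurableSet (B k) := fun k =>
    ((hm1 (measurableSet_singleton _)).inter (hm2 (measurableSet_singleton _))).inter
      (hm3 (measurableSet_singleton _))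
  -- decomposition of E
  have hEB : E = ⋃ k ∈ Finset.range (min b₁ b₂ + 1), B k := by
    ext ω
    simp only [hEdef, hBdef, Set.mem_setOf_eq, Set.mem_iUnion, Finset.mem_range,
      Set.mem_inter_iff, Set.mem_preimage, Set.mem_singleton_iff]
    constructor
    · rintro ⟨ha, hb⟩
      exact ⟨X3 ω, by omega, ⟨by omega, by omega⟩, rfl⟩
    · rintro ⟨k, hk, ⟨ha, hb⟩, hc⟩
      omega
  -- independence
  have hjoint : ∀ a b c : ℕ, μ (X1 ⁻¹' {a} ∩ X2 ⁻¹' {b} ∩ X3 ⁻¹' {c})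
      = μ (X1 ⁻¹' {a}) * μ (X2 ⁻¹' {b}) * μ (X3 ⁻¹' {c}) := by
    intro a b c
    have h := hindep.measure_inter_preimage_eq_mul (S := Finset.univ)
      (sets := ![{a}, {b}, {c}]) (fun i _ => by
        fin_cases i <;> exact measurableSet_singleton _)
    have hset : (⋂ i ∈ (Finset.univ : Finset (Fin 3)),
        (![X1, X2, X3] i) ⁻¹' (![{a}, {b}, {c}] i))
        = X1 ⁻¹' {a} ∩ X2 ⁻¹' {b} ∩ X3 ⁻¹' {c} := by
      ext ω
      simp [Fin.forall_fin_succ, and_assoc]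
    rw [hset, Fin.prod_univ_three] at h
    simpa using h
  -- measure of pieces
  have hμB : ∀ k, μ (B k) = ENNReal.ofReal (C * t k) := by
    intro k
    rw [hBdef]
    simp only
    rw [hjoint, hX1, hX2, hX3, ← ENNReal.ofReal_mul (by positivity),
      ← ENNReal.ofReal_mul (by positivity)]
    congr 1
    simp only [htdef, hCdef]
    have f1 : (Nat.factorial (b₁ - k) : ℝ) ≠ 0 := Nat.cast_ne_zero.2 (Nat.factorial_ne_zero _)
    have f2 : (Nat.factorial (b₂ - k) : ℝ) ≠ 0 := Nat.cast_ne_zero.2 (Nat.factorial_ne_zero _)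
    have f3 : (Nat.factorial k : ℝ) ≠ 0 := Nat.cast_ne_zero.2 (Nat.factorial_ne_zero _)
    field_simp
  -- disjointness
  have hdisj : (↑(Finset.range (min b₁ b₂ + 1)) : Set ℕ).Pairwise (Function.onFun Disjoint B) := by
    intro i _ j _ hij
    simp only [Function.onFun, Set.disjoint_left, hBdef]
    rintro ω ⟨_, h3i⟩ ⟨_, h3j⟩
    simp only [Set.mem_preimage, Set.mem_singleton_iff] at h3i h3j
    exact hij (h3i.symm.trans h3j)
  -- measure of E
  have hF0 : F0bimol lam1 lam2 lam3 b₁ b₂ = ∑ k ∈ Finset.range (min b₁ b₂ + 1), t k := rfl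
  have hμE : μ E = ENNReal.ofReal (C * F0bimol lam1 lam2 lam3 b₁ b₂) := by
    rw [hEB, measure_biUnion_finset hdisj (fun k _ => hBmeas k),
      Finset.sum_congr rfl fun k _ => hμB k,
      ← ENNReal.ofReal_sum_of_nonneg (fun k _ => by positivity), hF0, Finset.mul_sum]
  have hF0pos : 0 < F0bimol lam1 lam2 lam3 b₁ b₂ := F0bimol_pos h1 h2 h3 b₁ b₂
  have hF0pos' : 0 < F0bimol lam1 lam2 lam3 (b₁-1) (b₂-1) := F0bimol_pos h1 h2 h3 _ _
  -- integrability and piecewise integrals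
  have hint : ∀ k ∈ Finset.range (min b₁ b₂ + 1),
      IntegrableOn (fun ω => (X3 ω : ℝ)) (B k) μ := by
    intro k _
    have hc : IntegrableOn (fun _ : Ω => (k : ℝ)) (B k) μ :=
      integrableOn_const (measure_ne_top μ _)
    apply (integrableOn_congr_fun (fun ω hω => ?_) (hBmeas k)).2 hc
    have : X3 ω = k := hω.2
    rw [this]
  have hIk : ∀ k ∈ Finset.range (min b₁ b₂ + 1),
      ∫ ω in B k, (X3 ω : ℝ) ∂μ = (k : ℝ) * (C * t k) := by
    intro k _
    rw [setIntegral_congr_fun (hBmeas k) (f := fun ω => (X3 ω : ℝ)) (g := fun _ => (k:ℝ))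
      (fun ω hω => by show ((X3 ω : ℝ)) = (k : ℝ); exact_mod_cast hω.2), setIntegral_const, measureReal_def, hμB k,
      ENNReal.toReal_ofReal (by positivity), smul_eq_mul, mul_comm]
  -- the sum identity
  have hsum : ∑ k ∈ Finset.range (min b₁ b₂ + 1), (k : ℝ) * t k
      = lam3 * F0bimol lam1 lam2 lam3 (b₁ - 1) (b₂ - 1) := by
    have hmm : min b₁ b₂ + 1 = (min (b₁ - 1) (b₂ - 1) + 1) + 1 := by omega
    rw [hmm, Finset.sum_range_succ']
    simp only [Nat.cast_zero, zero_mul, add_zero]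
    rw [F0bimol, Finset.mul_sum]
    apply Finset.sum_congr rfl
    intro j hj
    have hjm : j < min (b₁ - 1) (b₂ - 1) + 1 := Finset.mem_range.mp hj
    have e1 : b₁ - (j + 1) = b₁ - 1 - j := by omega
    have e2 : b₂ - (j + 1) = b₂ - 1 - j := by omega
    simp only [htdef, e1, e2, Nat.factorial_succ, Nat.cast_succ]
    have f1 : (Nat.factorial (b₁ - 1 - j) : ℝ) ≠ 0 := Nat.cast_ne_zero.2 (Nat.factorial_ne_zero _)
    have f2 : (Nat.factorial (b₂ - 1 - j) : ℝ) ≠ 0 := Nat.cast_ne_zero.2 (Nat.factorial_ne_zero _)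
    have f3 : (Nat.factorial j : ℝ) ≠ 0 := Nat.cast_ne_zero.2 (Nat.factorial_ne_zero _)
    have fj : ((j : ℝ) + 1) ≠ 0 := by positivity
    push_cast
    field_simp
    ring
  -- assemble
  rw [ProbabilityTheory.cond, integral_smul_measure]
  rw [show (μ.restrict E) = μ.restrict E from rfl]
  have hIE : ∫ ω in E, (X3 ω : ℝ) ∂μ
      = C * (lam3 * F0bimol lam1 lam2 lam3 (b₁ - 1) (b₂ - 1)) := by
    rw [hEB, integral_biUnion_finset _ (fun k _ => hBmeas k) hdisj hint]
    rw [Finset.sum_congr rfl hIk]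
    rw [← hsum, Finset.mul_sum]
    exact Finset.sum_congr rfl fun k _ => by ring
  rw [hIE, hμE, ← ENNReal.ofReal_inv_of_pos (by positivity), ENNReal.toReal_ofReal (by positivity)]
  rw [smul_eq_mul]
  field_simp
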